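/- A point ξ of the punctual Hilbert scheme Hilb^k₀(ℂⁿ) (length-k subschemes supported at the origin) fails to be curvilinear if and only if its defining ideal I_ξ contains the power (x₁,...,x_n)^{k−1} of the maximal ideal; equivalently, the local algebra O_ξ has no element of degree k−1. Consequently, the curvilinear locus is open in Hilb^k₀(ℂⁿ) within its closure, and its closure is an irreducible component of Hilb^k₀(ℂⁿ). -/

import Mathlib

open Polynomial

/-- Coefficients of a vector-valued polynomial identity that vanishes for all scalars vanish. -/
lemma aux_coeff {V : Type*} [AddCommGroup V] [Module ℂ V] (m : ℕ) (c : ℕ → V)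
    (h : ∀ x : ℂ, ∑ i ∈ Finset.range m, x ^ i • c i = 0) :
    ∀ i < m, c i = 0 := by
  intro i him
  rw [← Module.forall_dual_apply_eq_zero_iff ℂ]
  intro φ
  have hP : (∑ j ∈ Finset.range m, Polynomial.C (φ (c j)) * Polynomial.X ^ j : ℂ[X]) = 0 := by
    apply Polynomial.funext
    intro x
    rw [Polynomial.eval_finset_sum]
    simp only [Polynomial.eval_mul, Polynomial.eval_C, Polynomial.eval_pow, Polynomial.eval_X,
      Polynomial.eval_zero]
    have : (∑ j ∈ Finset.range m, φ (c j) * x ^ j) = φ (∑ j ∈ Finset.range m, x ^ j • c j) := by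
      rw [map_sum]
      exact Finset.sum_congr rfl fun j _ => by rw [map_smul, smul_eq_mul, mul_comm]
    rw [this, h x, map_zero]
  have h2 := congrArg (fun p => Polynomial.coeff p i) hP
  simp only [Polynomial.finset_sum_coeff, Polynomial.coeff_C_mul, Polynomial.coeff_X_pow,
    Polynomial.coeff_zero, mul_ite, mul_one, mul_zero] at h2
  rwa [Finset.sum_ite_eq (Finset.range m) i (fun j => φ (c j)), if_pos (Finset.mem_range.mpr him)] at h2

variable {A : Type*} [CommRing A] [Algebra ℂ A]

lemma aux_unit [IsLocalRing A] (π : A →ₐ[ℂ] ℂ) {u : A} (hu : π u ≠ 0) : IsUnit u := by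
  by_contra h
  have hker : RingHom.ker π.toRingHom = IsLocalRing.maximalIdeal A :=
    IsLocalRing.ker_eq_maximalIdeal _ (fun c => ⟨algebraMap ℂ A c, by simp⟩)
  have hmem : u ∈ RingHom.ker π.toRingHom := by
    rw [hker]; exact h
  exact hu (by simpa using (RingHom.mem_ker).mp hmem)

lemma aux_Z [IsLocalRing A] (π : A →ₐ[ℂ] ℂ) {t : A} (ht : π t = 0) {p : ℂ[X]} (hp : p ≠ 0)
    (h0 : Polynomial.aeval t p = 0) : t ^ (p.rootMultiplicity 0) = 0 := by
  set r := p.rootMultiplicity 0 with hr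
  set q := p /ₘ (X - C 0) ^ r with hq
  have hfac : (X - C 0) ^ r * q = p := Polynomial.pow_mul_divByMonic_rootMultiplicity_eq p 0
  have hq0 : q.eval 0 ≠ 0 := Polynomial.eval_divByMonic_pow_rootMultiplicity_ne_zero 0 hp
  have hmul : t ^ r * Polynomial.aeval t q = 0 := by
    have h3 := congrArg (Polynomial.aeval t) hfac
    simpa [map_mul, map_pow, h0] using h3
  have hunit : IsUnit (Polynomial.aeval t q) := by
    apply aux_unit π
    have h4 : π (Polynomial.aeval t q) = Polynomial.aeval (π t) q :=
      (Polynomial.aeval_algHom_apply π t q).symm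
    rw [h4, ht]
    simpa using hq0
  exact (hunit.mul_left_eq_zero).mp hmul

lemma aux_pow_zero [IsLocalRing A] (π : A →ₐ[ℂ] ℂ) {t : A} (ht : π t = 0) {p : ℂ[X]}
    (hp : p ≠ 0) (h0 : Polynomial.aeval t p = 0) {K : ℕ} (hdeg : p.natDegree ≤ K) :
    t ^ K = 0 := by
  have hdvd : ((X - C 0 : ℂ[X]) ^ (p.rootMultiplicity 0)) ∣ p :=
    Polynomial.pow_rootMultiplicity_dvd p 0
  have hrd : p.rootMultiplicity 0 ≤ K := by
    have h5 := Polynomial.natDegree_le_of_dvd hdvd hp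
    simpa using h5.trans hdeg
  obtain ⟨d, hd⟩ := Nat.le.dest hrd
  rw [← hd, pow_add, aux_Z π ht hp h0, zero_mul]

lemma aux_indep [IsLocalRing A] (π : A →ₐ[ℂ] ℂ) {t : A} (ht : π t = 0) (M : ℕ)
    (hM : t ^ M ≠ 0) : LinearIndependent ℂ (fun i : Fin (M + 1) => t ^ (i : ℕ)) := by
  rw [Fintype.linearIndependent_iff]
  intro g hg
  set P : ℂ[X] := ∑ i : Fin (M + 1), Polynomial.C (g i) * Polynomial.X ^ (i : ℕ) with hPdef
  have haev : Polynomial.aeval t P = 0 := by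
    rw [hPdef, map_sum]
    simpa [Algebra.smul_def] using hg
  have hP : P = 0 := by
    by_contra hP0
    apply hM
    apply aux_pow_zero π ht hP0 haev
    apply Polynomial.natDegree_sum_le_of_forall_le
    intro i _
    refine (Polynomial.natDegree_C_mul_le _ _).trans ?_
    simpa using Nat.lt_succ_iff.mp i.isLt
  intro i
  have h2 := congrArg (fun p => Polynomial.coeff p (i : ℕ)) hP
  simp only [hPdef, Polynomial.finset_sum_coeff, Polynomial.coeff_C_mul, Polynomial.coeff_X_pow,
    Polynomial.coeff_zero, mul_ite, mul_one, mul_zero] at h2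
  rw [Finset.sum_eq_single i (fun j _ hji => by
        rw [if_neg (fun hh : (i : ℕ) = (j : ℕ) => hji (Fin.ext hh.symm))])
      (fun hni => absurd (Finset.mem_univ i) hni)] at h2
  simpa using h2

lemma aux_pol (π : A →ₐ[ℂ] ℂ) (K : ℕ) (H : ∀ t : A, π t = 0 → t ^ K = 0) :
    ∀ x ∈ (RingHom.ker π.toRingHom) ^ K, x = 0 := by
  suffices h : ∀ j, j ≤ K → ∀ x ∈ (RingHom.ker π.toRingHom) ^ j,
      ∀ t ∈ RingHom.ker π.toRingHom, x * t ^ (K - j) = 0 by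
    intro x hx
    have h6 := h K le_rfl x hx 0 (by simp [RingHom.mem_ker])
    simpa using h6
  intro j
  induction j with
  | zero =>
    intro _ x _ t ht
    rw [Nat.sub_zero, H t (by simpa using (RingHom.mem_ker).mp ht), mul_zero]
  | succ j ih =>
    intro hj x hx t ht
    rw [pow_succ] at hx
    refine Submodule.mul_induction_on hx (fun y hy z hz => ?_)
      (fun a b ha hb => by rw [add_mul, ha, hb, add_zero])
    set m := K - j with hm
    have hm1 : 1 ≤ m := by omega
    have hsum : ∀ lam : ℂ, ∑ i ∈ Finset.range (m + 1),
        lam ^ i • (y * (z ^ (m - i) * t ^ i * (Nat.choose m i : A))) = 0 := by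
      intro lam
      have hz' : z + lam • t ∈ RingHom.ker π.toRingHom := by
        refine Ideal.add_mem _ hz ?_
        rw [Algebra.smul_def]
        exact Ideal.mul_mem_left _ _ ht
      have h0 := ih (by omega) y hy (z + lam • t) hz'
      calc ∑ i ∈ Finset.range (m + 1),
            lam ^ i • (y * (z ^ (m - i) * t ^ i * (Nat.choose m i : A)))
          = y * (lam • t + z) ^ m := by
            rw [add_pow, Finset.mul_sum]
            refine Finset.sum_congr rfl fun i _ => ?_
            simp only [Algebra.smul_def, map_pow, mul_pow]
            ring
        _ = y * (z + lam • t) ^ (K - j) := by rw [add_comm, hm]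
        _ = 0 := h0
    have hc := aux_coeff (m + 1) _ hsum (m - 1) (by omega)
    have h1 : y * (z ^ 1 * t ^ (m - 1) * (m : A)) = 0 := by
      have e1 : m - (m - 1) = 1 := by omega
      have e2 : (Nat.choose m (m - 1)) = m := by
        obtain ⟨m', hm'⟩ := Nat.exists_eq_add_of_le hm1
        rw [show m - 1 = m' by omega, show m = m' + 1 by omega, Nat.choose_succ_self_right]
      rwa [e1, e2] at hc
    have hm0 : (m : ℂ) ≠ 0 := Nat.cast_ne_zero.mpr (by omega)
    have hsmul : (m : ℂ) • (y * z * t ^ (m - 1)) = 0 := by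
      rw [Algebra.smul_def, map_natCast]
      linear_combination h1
    have hv : y * z * t ^ (m - 1) = 0 := by
      have h7 := congrArg (fun w => ((m : ℂ))⁻¹ • w) hsmul
      simpa [smul_smul, inv_mul_cancel₀ hm0] using h7
    have hK : K - (j + 1) = m - 1 := by omega
    rw [hK]
    linear_combination hv


/-!
STATEMENT 15: A length-`k` subscheme `ξ` supported at the origin of `ℂⁿ`, with defining
ideal `I ⊆ 𝔪 = (x₁,…,x_n)` of colength `k` in `ℂ[[x₁,…,x_n]]`, is curvilinear (i.e. its
local algebra is isomorphic to `ℂ[z]/(z^k)`) if and only if `I` does not contain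
`𝔪^{k−1}`; equivalently, `ξ` fails to be curvilinear iff `𝔪^{k−1} ⊆ I`, i.e. iff the
local algebra has no element of degree `k−1`.
-/
set_option maxHeartbeats 1000000 in
theorem curvilinear_iff_not_contains_power (n k : ℕ) (hk : 1 ≤ k)
    (I : Ideal (MvPowerSeries (Fin n) ℂ))
    (hIm : I ≤ RingHom.ker ((MvPowerSeries.constantCoeff : MvPowerSeries (Fin n) ℂ →+* ℂ)))
    (hlen : Module.finrank ℂ (MvPowerSeries (Fin n) ℂ ⧸ I) = k) :
    Nonempty ((MvPowerSeries (Fin n) ℂ ⧸ I) ≃ₐ[ℂ]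
        (Polynomial ℂ ⧸ Ideal.span {(Polynomial.X : Polynomial ℂ) ^ k}))
      ↔ ¬ ((RingHom.ker ((MvPowerSeries.constantCoeff : MvPowerSeries (Fin n) ℂ →+* ℂ))) ^ (k - 1) ≤ I) := by
  obtain ⟨K, rfl⟩ : ∃ K, k = K + 1 := ⟨k - 1, (Nat.succ_pred_eq_of_pos hk).symm⟩
  simp only [Nat.add_sub_cancel]
  haveI hFD : FiniteDimensional ℂ (MvPowerSeries (Fin n) ℂ ⧸ I) :=
    FiniteDimensional.of_finrank_pos (by rw [hlen]; omega)
  haveI hNT : Nontrivial (MvPowerSeries (Fin n) ℂ ⧸ I) := by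
    rcases subsingleton_or_nontrivial (MvPowerSeries (Fin n) ℂ ⧸ I) with hs | hn
    · exfalso
      have h0 := hlen
      rw [Module.finrank_zero_of_subsingleton] at h0
      omega
    · exact hn
  haveI : IsLocalRing (MvPowerSeries (Fin n) ℂ ⧸ I) :=
    IsLocalRing.of_surjective' (Ideal.Quotient.mk I) Ideal.Quotient.mk_surjective
  -- the algebra map to ℂ induced by the constant coefficient
  let cc : MvPowerSeries (Fin n) ℂ →ₐ[ℂ] ℂ :=
    { (MvPowerSeries.constantCoeff : MvPowerSeries (Fin n) ℂ →+* ℂ) with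
      commutes' := fun c => by simp [MvPowerSeries.algebraMap_apply] }
  let π : (MvPowerSeries (Fin n) ℂ ⧸ I) →ₐ[ℂ] ℂ :=
    Ideal.Quotient.liftₐ I cc (fun a ha => by
      exact (RingHom.mem_ker).mp (hIm ha))
  have hπmk : ∀ x : MvPowerSeries (Fin n) ℂ,
      π (Ideal.Quotient.mk I x) = (MvPowerSeries.constantCoeff : MvPowerSeries (Fin n) ℂ →+* ℂ) x := fun x => by
    simp [π, Ideal.Quotient.liftₐ_apply, cc]
  constructor
  · rintro ⟨e⟩ hle
    set s : Polynomial ℂ ⧸ Ideal.span {(Polynomial.X : Polynomial ℂ) ^ (K + 1)} :=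
      Ideal.Quotient.mk _ Polynomial.X with hs
    have hsK1 : s ^ (K + 1) = 0 := by
      rw [hs, ← map_pow, Ideal.Quotient.eq_zero_iff_mem]
      exact Ideal.subset_span rfl
    set t : MvPowerSeries (Fin n) ℂ ⧸ I := e.symm s with htdef
    have hπt : π t = 0 := by
      have h1 : (π t) ^ (K + 1) = 0 := by
        rw [← map_pow, htdef, ← map_pow, hsK1, map_zero, map_zero]
      exact pow_eq_zero_iff (Nat.succ_ne_zero K) |>.mp h1
    obtain ⟨x, hx⟩ := Ideal.Quotient.mk_surjective t
    have hxm : x ∈ RingHom.ker ((MvPowerSeries.constantCoeff : MvPowerSeries (Fin n) ℂ →+* ℂ)) := by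
      rw [RingHom.mem_ker, ← hπmk x, hx, hπt]
    have htK : t ^ K = 0 := by
      rw [← hx, ← map_pow, Ideal.Quotient.eq_zero_iff_mem]
      exact hle (Ideal.pow_mem_pow hxm K)
    have hsK : s ^ K = 0 := by
      calc s ^ K = e (t ^ K) := by rw [map_pow, htdef, AlgEquiv.apply_symm_apply]
        _ = 0 := by rw [htK, map_zero]
    rw [hs, ← map_pow, Ideal.Quotient.eq_zero_iff_mem, Ideal.mem_span_singleton] at hsK
    have hdeg := Polynomial.natDegree_le_of_dvd hsK (pow_ne_zero K Polynomial.X_ne_zero)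
    simp only [Polynomial.natDegree_pow, Polynomial.natDegree_X, mul_one] at hdeg
    omega
  · intro hle
    -- find t with π t = 0 and t ^ K ≠ 0
    obtain ⟨t, hπt, htK⟩ : ∃ t : MvPowerSeries (Fin n) ℂ ⧸ I, π t = 0 ∧ t ^ K ≠ 0 := by
      by_contra hex
      push_neg at hex
      apply hle
      intro x hx
      have hmap : Ideal.map (Ideal.Quotient.mk I)
          (RingHom.ker ((MvPowerSeries.constantCoeff : MvPowerSeries (Fin n) ℂ →+* ℂ))) ≤ RingHom.ker π.toRingHom := by
        rw [Ideal.map_le_iff_le_comap]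
        intro y hy
        rw [Ideal.mem_comap, RingHom.mem_ker]
        show π (Ideal.Quotient.mk I y) = 0
        rw [hπmk y]
        exact (RingHom.mem_ker).mp hy
      have h1 : Ideal.Quotient.mk I x ∈
          (Ideal.map (Ideal.Quotient.mk I)
            (RingHom.ker ((MvPowerSeries.constantCoeff : MvPowerSeries (Fin n) ℂ →+* ℂ)))) ^ K := by
        rw [← Ideal.map_pow]
        exact Ideal.mem_map_of_mem _ hx
      have h2 := (Ideal.pow_right_mono hmap K) h1
      have h3 := aux_pol π K (fun u hu => hex u hu) _ h2
      rwa [Ideal.Quotient.eq_zero_iff_mem] at h3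
    -- t ^ (K+1) = 0
    have htK1 : t ^ (K + 1) = 0 := by
      by_contra htk1
      have hli := aux_indep π hπt (K + 1) htk1
      have hcard := hli.fintype_card_le_finrank
      rw [hlen, Fintype.card_fin] at hcard
      omega
    -- the algebra map from the truncated polynomial ring
    let ψ : (Polynomial ℂ ⧸ Ideal.span {(Polynomial.X : Polynomial ℂ) ^ (K + 1)}) →ₐ[ℂ]
        (MvPowerSeries (Fin n) ℂ ⧸ I) :=
      Ideal.Quotient.liftₐ _ (Polynomial.aeval t) (fun p hp => by
        rw [Ideal.mem_span_singleton] at hp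
        obtain ⟨q, rfl⟩ := hp
        rw [map_mul, map_pow, Polynomial.aeval_X, htK1, zero_mul])
    have hψmk : ∀ p : ℂ[X], ψ (Ideal.Quotient.mk _ p) = Polynomial.aeval t p := fun p => by
      simp [ψ, Ideal.Quotient.liftₐ_apply]; rfl
    have hinj : Function.Injective ψ := by
      rw [injective_iff_map_eq_zero]
      intro a ha
      obtain ⟨p, rfl⟩ := Ideal.Quotient.mk_surjective a
      rw [hψmk] at ha
      rw [Ideal.Quotient.eq_zero_iff_mem, Ideal.mem_span_singleton]
      by_cases hp : p = 0
      · simp [hp]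
      · have hZ := aux_Z π hπt hp ha
        have hr : K + 1 ≤ p.rootMultiplicity 0 := by
          by_contra hlt
          push_neg at hlt
          apply htK
          have h4 : t ^ K = t ^ (p.rootMultiplicity 0) * t ^ (K - p.rootMultiplicity 0) := by
            rw [← pow_add]
            congr 1
            omega
          rw [h4, hZ, zero_mul]
        have hdvd : (Polynomial.X : ℂ[X]) ^ (p.rootMultiplicity 0) ∣ p := by
          simpa using Polynomial.pow_rootMultiplicity_dvd p 0
        exact dvd_trans (pow_dvd_pow _ hr) hdvd
    have hli := aux_indep π hπt K htK
    let b := basisOfLinearIndependentOfCardEqFinrank hli (by rw [Fintype.card_fin, hlen])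
    have hsp : Submodule.span ℂ (Set.range fun i : Fin (K + 1) => t ^ (i : ℕ)) = ⊤ := by
      have hb := b.span_eq
      rwa [show ⇑b = fun i : Fin (K + 1) => t ^ (i : ℕ) from
        coe_basisOfLinearIndependentOfCardEqFinrank hli _] at hb
    have hsurj : Function.Surjective ψ := by
      intro a
      have ha : a ∈ Submodule.span ℂ (Set.range fun i : Fin (K + 1) => t ^ (i : ℕ)) := by
        rw [hsp]; exact Submodule.mem_top
      have hsub : Submodule.span ℂ (Set.range fun i : Fin (K + 1) => t ^ (i : ℕ))
          ≤ Subalgebra.toSubmodule ψ.range := by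
        rw [Submodule.span_le]
        rintro _ ⟨i, rfl⟩
        refine ⟨Ideal.Quotient.mk _ (Polynomial.X ^ (i : ℕ)), ?_⟩
        show ψ (Ideal.Quotient.mk _ (Polynomial.X ^ (i : ℕ))) = t ^ (i : ℕ)
        rw [hψmk, map_pow, Polynomial.aeval_X]
      obtain ⟨p, hp⟩ := hsub ha
      exact ⟨p, hp⟩
    exact ⟨(AlgEquiv.ofBijective ψ ⟨hinj, hsurj⟩).symm⟩
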